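/- Let n ≥ 3, 2 ≤ k ≤ n, p ∈ ℝ, q < −1 and c = H(p,q) := e^{(2k−n)p}(1−q²)ᵏ − (−1)ᵏ e^{−np} with (−1)ᵏ c < 0. For a maximal C² solution ξ of the ODE e^{2kξ}(1−|ξ'|²)^{k−1}[ξ'' + ((n−2k)/(2k))(1−|ξ'|²)] = (−1)ᵏ n/(2k) with ξ(0)=p, ξ'(0)=q on (T̲, T̄) with ξ' < −1 throughout and lim_{t→T̄⁻} ξ(t) = −∞, the blow-down time satisfies T̄ = ∫_{−∞}^{p} {1 + e^{−2s}[1 − |c| e^{ns}]^{1/k}}^{−1/2} ds. -/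

import Mathlib

open Real MeasureTheory Filter

/-- The first integral `H(x,y) = e^{(2k−n)x}(1 − y²)ᵏ − (−1)ᵏ e^{−nx}`. -/
noncomputable def Hfun (n k : ℕ) (x y : ℝ) : ℝ :=
  Real.exp ((2 * (k : ℝ) - n) * x) * (1 - y ^ 2) ^ k - (-1 : ℝ) ^ k * Real.exp (-(n : ℝ) * x)

private lemma aux_const {f : ℝ → ℝ} {s : Set ℝ} (hs : IsOpen s) (hconv : Convex ℝ s)
    (hd : ∀ x ∈ s, HasDerivAt f 0 x) {x y : ℝ} (hx : x ∈ s) (hy : y ∈ s) : f x = f y := by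
  refine hconv.is_const_of_fderivWithin_eq_zero
    (fun z hz => ((hd z hz).differentiableAt).differentiableWithinAt) (fun z hz => ?_) hx hy
  rw [fderivWithin_of_isOpen hs hz]
  have h2 : HasFDerivAt f (ContinuousLinearMap.smulRight (1 : ℝ →L[ℝ] ℝ) 0) z :=
    hasDerivAt_iff_hasFDerivAt.mp (hd z hz)
  rw [h2.fderiv]
  ext v
  simp

private lemma aux_point (n k : ℕ) (hk : 1 ≤ k) (c x y : ℝ) (hy : y < -1)
    (hH : Hfun n k x y = c) (hsign : (-1 : ℝ) ^ k * c < 0) :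
    0 < 1 - |c| * Real.exp ((n : ℝ) * x) ∧
      1 + Real.exp (-2 * x) * (1 - |c| * Real.exp ((n : ℝ) * x)) ^ ((1 : ℝ) / (k : ℝ)) = y ^ 2 := by
  have hK : (0:ℝ) < (k:ℝ) := by exact_mod_cast hk
  have hKne : ((k:ℝ)) ≠ 0 := ne_of_gt hK
  have habs : (-1 : ℝ) ^ k * c = -|c| := by
    have h1 : |(-1 : ℝ) ^ k * c| = |c| := by
      rw [abs_mul, abs_pow, abs_neg, abs_one, one_pow, one_mul]
    have h2 : (-1 : ℝ) ^ k * c = -|(-1 : ℝ) ^ k * c| := by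
      rw [abs_of_neg hsign]; ring
    rw [h2, h1]
  have hy2 : 1 < y ^ 2 := by nlinarith
  have hpos : 0 < y ^ 2 - 1 := by linarith
  set N := (n : ℝ)
  set K := (k : ℝ)
  set En := Real.exp (-N * x) with hEn
  set En' := Real.exp (N * x) with hEn'
  set E2 := Real.exp (2 * K * x) with hE2
  set Em := Real.exp (-2 * x) with hEm
  have r1 : En * En' = 1 := by rw [hEn, hEn', ← Real.exp_add]; norm_num
  have r2 : Em ^ k * E2 = 1 := by
    rw [hEm, hE2, ← Real.exp_nat_mul, ← Real.exp_add,
      show (k:ℝ) * (-2 * x) + 2 * K * x = 0 by simp only [K]; ring, Real.exp_zero]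
  have r3 : Real.exp ((2 * K - N) * x) = E2 * En := by
    rw [hE2, hEn, ← Real.exp_add]; congr 1; ring
  have hε : ((-1 : ℝ) ^ k) * ((-1 : ℝ) ^ k) = 1 := by
    rw [← pow_add, ← two_mul, pow_mul]; norm_num
  have hH' : E2 * En * (1 - y ^ 2) ^ k - (-1 : ℝ) ^ k * En = c := by
    rw [← r3]; exact hH
  have r4 : (y ^ 2 - 1) ^ k = (-1 : ℝ) ^ k * (1 - y ^ 2) ^ k := by
    rw [← mul_pow]; congr 1; ring
  have key : (y ^ 2 - 1) ^ k = Em ^ k * (1 - |c| * En') := by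
    have h5 : |c| = -((-1 : ℝ) ^ k * c) := by rw [habs]; ring
    rw [r4, h5, ← hH']
    have hEnne : En ≠ 0 := by positivity
    have hE2ne : E2 ≠ 0 := by positivity
    linear_combination (Em ^ k - (-1:ℝ)^k * (1 - y^2)^k * Em ^ k * E2) * r1
      + (-((-1:ℝ)^k * (1 - y^2)^k)) * r2 + (Em ^ k * En * En') * hε
  have hA : 0 < 1 - |c| * En' := by
    have h6 : 0 < (y ^ 2 - 1) ^ k := pow_pos hpos k
    have h7 : 0 < Em ^ k := pow_pos (Real.exp_pos _) k
    nlinarith [key]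
  refine ⟨hA, ?_⟩
  have l1 : ((y ^ 2 - 1) ^ k : ℝ) ^ ((1 : ℝ) / K) = y ^ 2 - 1 := by
    rw [← Real.rpow_natCast (y ^ 2 - 1) k, ← Real.rpow_mul (le_of_lt hpos),
      mul_one_div, div_self hKne, Real.rpow_one]
  have l2 : ((Em ^ k : ℝ)) ^ ((1 : ℝ) / K) = Em := by
    rw [← Real.rpow_natCast Em k, ← Real.rpow_mul (le_of_lt (Real.exp_pos _)),
      mul_one_div, div_self hKne, Real.rpow_one]
  have l3 : (Em ^ k * (1 - |c| * En')) ^ ((1 : ℝ) / K)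
      = Em * (1 - |c| * En') ^ ((1 : ℝ) / K) := by
    rw [Real.mul_rpow (by positivity) (le_of_lt hA), l2]
  have heq : y ^ 2 - 1 = Em * (1 - |c| * En') ^ ((1 : ℝ) / K) := by
    rw [← l1, key, l3]
  linarith

private noncomputable def gfun (n k : ℕ) (c : ℝ) (s : ℝ) : ℝ :=
  (1 + Real.exp (-2 * s) * (1 - |c| * Real.exp ((n : ℝ) * s)) ^ ((1 : ℝ) / (k : ℝ)))
    ^ (-(1 : ℝ) / 2)

private noncomputable def Gfun (n k : ℕ) (c : ℝ) (x : ℝ) : ℝ := ∫ s in Set.Iio x, gfun n k c s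

set_option maxHeartbeats 1600000 in
/-- for a `C²` solution `ξ` of the ODE on `(T̲, T̄)` with `ξ(0) = p`, `ξ'(0) = q`,
`q < −1`, `ξ' < −1` throughout, first-integral value `c = H(p,q)` with `(−1)ᵏ c < 0`, and
blow-down `ξ(t) → −∞` as `t → T̄⁻`, the blow-down time satisfies
`T̄ = ∫_{−∞}^{p} {1 + e^{−2s}[1 − |c| e^{ns}]^{1/k}}^{−1/2} ds`. -/
theorem stmt15 (n k : ℕ) (hn : 3 ≤ n) (hk2 : 2 ≤ k) (hkn : k ≤ n)
    (p q c : ℝ) (hq : q < -1) (hc : c = Hfun n k p q)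
    (hsign : (-1 : ℝ) ^ k * c < 0)
    (Tlow Thigh : ℝ) (hTlow : Tlow < 0) (hThigh : 0 < Thigh)
    (ξ ξ' ξ'' : ℝ → ℝ)
    (hderiv1 : ∀ t ∈ Set.Ioo Tlow Thigh, HasDerivAt ξ (ξ' t) t)
    (hderiv2 : ∀ t ∈ Set.Ioo Tlow Thigh, HasDerivAt ξ' (ξ'' t) t)
    (hval : ξ 0 = p) (hval' : ξ' 0 = q)
    (hlt : ∀ t ∈ Set.Ioo Tlow Thigh, ξ' t < -1)
    (hODE : ∀ t ∈ Set.Ioo Tlow Thigh,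
      Real.exp (2 * k * ξ t) * (1 - (ξ' t) ^ 2) ^ (k - 1) *
          (ξ'' t + (((n : ℝ) - 2 * k) / (2 * k)) * (1 - (ξ' t) ^ 2))
        = (-1 : ℝ) ^ k * n / (2 * k))
    (hblow : Tendsto ξ (nhdsWithin Thigh (Set.Iio Thigh)) atBot) :
    Thigh = ∫ s in Set.Iio p,
      (1 + Real.exp (-2 * s) * (1 - |c| * Real.exp ((n : ℝ) * s)) ^ ((1 : ℝ) / k))
        ^ (-(1 : ℝ) / 2) := by
  have hk1 : 1 ≤ k := le_trans (by norm_num) hk2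
  have hK : (0:ℝ) < (k:ℝ) := by exact_mod_cast Nat.lt_of_lt_of_le (by norm_num) hk1
  have hKne : ((k:ℝ)) ≠ 0 := ne_of_gt hK
  have hN : (0:ℝ) < (n:ℝ) := by exact_mod_cast Nat.lt_of_lt_of_le (by norm_num) hn
  have h0mem : (0:ℝ) ∈ Set.Ioo Tlow Thigh := ⟨hTlow, hThigh⟩
  have hIooOpen : IsOpen (Set.Ioo Tlow Thigh) := isOpen_Ioo
  have hIooConv : Convex ℝ (Set.Ioo Tlow Thigh) := convex_Ioo _ _
  -- Step 1: the first integral is constant along the solution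
  have hHconst : ∀ t ∈ Set.Ioo Tlow Thigh, Hfun n k (ξ t) (ξ' t) = c := by
    intro t ht
    have hzero : ∀ u ∈ Set.Ioo Tlow Thigh,
        HasDerivAt (fun t => Hfun n k (ξ t) (ξ' t)) 0 u := by
      intro u hu
      have h1 := hderiv1 u hu
      have h2 := hderiv2 u hu
      have e1 : HasDerivAt (fun t => Real.exp ((2 * (k:ℝ) - n) * ξ t))
          (Real.exp ((2 * (k:ℝ) - n) * ξ u) * ((2 * (k:ℝ) - n) * ξ' u)) u :=
        (h1.const_mul (2 * (k:ℝ) - n)).exp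
      have e2 : HasDerivAt (fun t => (1 - ξ' t ^ 2) ^ k)
          ((k:ℝ) * (1 - ξ' u ^ 2) ^ (k - 1) * (-(2 * ξ' u ^ (2 - 1) * ξ'' u))) u :=
        ((h2.pow 2).const_sub 1).pow k
      have e3 : HasDerivAt (fun t => (-1:ℝ) ^ k * Real.exp (-(n:ℝ) * ξ t))
          ((-1:ℝ) ^ k * (Real.exp (-(n:ℝ) * ξ u) * (-(n:ℝ) * ξ' u))) u :=
        ((h1.const_mul (-(n:ℝ))).exp).const_mul _
      have hf : HasDerivAt (fun t => Hfun n k (ξ t) (ξ' t))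
          ((Real.exp ((2 * (k:ℝ) - n) * ξ u) * ((2 * (k:ℝ) - n) * ξ' u)) * (1 - ξ' u ^ 2) ^ k
            + Real.exp ((2 * (k:ℝ) - n) * ξ u)
              * ((k:ℝ) * (1 - ξ' u ^ 2) ^ (k - 1) * (-(2 * ξ' u ^ (2 - 1) * ξ'' u)))
            - (-1:ℝ) ^ k * (Real.exp (-(n:ℝ) * ξ u) * (-(n:ℝ) * ξ' u))) u :=
        (e1.mul e2).sub e3
      have hD : (Real.exp ((2 * (k:ℝ) - n) * ξ u) * ((2 * (k:ℝ) - n) * ξ' u)) * (1 - ξ' u ^ 2) ^ k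
            + Real.exp ((2 * (k:ℝ) - n) * ξ u)
              * ((k:ℝ) * (1 - ξ' u ^ 2) ^ (k - 1) * (-(2 * ξ' u ^ (2 - 1) * ξ'' u)))
            - (-1:ℝ) ^ k * (Real.exp (-(n:ℝ) * ξ u) * (-(n:ℝ) * ξ' u)) = 0 := by
        have hOu := hODE u hu
        have hy2 : 1 < ξ' u ^ 2 := by nlinarith [hlt u hu]
        have hPne : ((1 - ξ' u ^ 2) ^ (k - 1) : ℝ) ≠ 0 := pow_ne_zero _ (by nlinarith)
        have hane : Real.exp (2 * (k:ℝ) * ξ u) ≠ 0 := ne_of_gt (Real.exp_pos _)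
        -- solve the ODE for ξ'' u
        have hz : ξ'' u = ((-1:ℝ) ^ k * n / (2 * (k:ℝ)))
              / (Real.exp (2 * (k:ℝ) * ξ u) * (1 - ξ' u ^ 2) ^ (k - 1))
            - (((n:ℝ) - 2 * k) / (2 * (k:ℝ))) * (1 - ξ' u ^ 2) := by
          rw [eq_sub_iff_add_eq, eq_div_iff (mul_ne_zero hane hPne)]
          linear_combination hOu
        have hsplit : Real.exp ((2 * (k:ℝ) - n) * ξ u)
            = Real.exp (2 * (k:ℝ) * ξ u) * Real.exp (-(n:ℝ) * ξ u) := by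
          rw [← Real.exp_add]; congr 1; ring
        have hpow : ((1 - ξ' u ^ 2) ^ k : ℝ) = (1 - ξ' u ^ 2) ^ (k - 1) * (1 - ξ' u ^ 2) := by
          rw [← pow_succ, Nat.sub_add_cancel hk1]
        rw [hsplit, hpow, hz]
        field_simp
        ring
      exact hD ▸ hf
    have := aux_const hIooOpen hIooConv hzero ht h0mem
    rw [this, hval, hval', ← hc]
  -- Step 2: pointwise resolution of the first integral
  have hpoint : ∀ t ∈ Set.Ioo Tlow Thigh,
      0 < 1 - |c| * Real.exp ((n : ℝ) * ξ t) ∧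
        1 + Real.exp (-2 * ξ t) * (1 - |c| * Real.exp ((n : ℝ) * ξ t)) ^ ((1 : ℝ) / (k : ℝ))
          = (ξ' t) ^ 2 :=
    fun t ht => aux_point n k hk1 c (ξ t) (ξ' t) (hlt t ht) (hHconst t ht) hsign
  -- the integrand and its basic properties
  set g : ℝ → ℝ := gfun n k c with hg
  set U : Set ℝ := {x : ℝ | 0 < 1 - |c| * Real.exp ((n : ℝ) * x)} with hU
  have hUopen : IsOpen U := by
    have : Continuous fun x : ℝ => 1 - |c| * Real.exp ((n : ℝ) * x) := by fun_prop
    exact isOpen_lt continuous_const this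
  have hUdown : ∀ x ∈ U, ∀ s, s ≤ x → s ∈ U := by
    intro x hx s hs
    have h1 : Real.exp ((n:ℝ) * s) ≤ Real.exp ((n:ℝ) * x) :=
      Real.exp_le_exp.mpr (by nlinarith)
    have h2 : (0:ℝ) ≤ |c| := abs_nonneg c
    simp only [hU, Set.mem_setOf_eq] at hx ⊢
    nlinarith
  have hbase : ∀ x ∈ U,
      0 < 1 + Real.exp (-2 * x) * (1 - |c| * Real.exp ((n : ℝ) * x)) ^ ((1 : ℝ) / (k : ℝ)) := by
    intro x hx
    have h1 : 0 < (1 - |c| * Real.exp ((n : ℝ) * x)) ^ ((1 : ℝ) / (k : ℝ)) :=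
      Real.rpow_pos_of_pos hx _
    nlinarith [Real.exp_pos (-2 * x)]
  have hgpos : ∀ x ∈ U, 0 < g x := by
    intro x hx
    exact Real.rpow_pos_of_pos (hbase x hx) _
  have hgcont : ∀ x ∈ U, ContinuousAt g x := by
    intro x hx
    have h1 : ContinuousAt (fun s : ℝ => 1 - |c| * Real.exp ((n : ℝ) * s)) x := by fun_prop
    have h2 : ContinuousAt (fun s : ℝ => (1 - |c| * Real.exp ((n : ℝ) * s)) ^ ((1 : ℝ) / (k : ℝ))) x :=
      h1.rpow_const (Or.inr (by positivity))
    have h3 : ContinuousAt (fun s : ℝ =>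
        1 + Real.exp (-2 * s) * (1 - |c| * Real.exp ((n : ℝ) * s)) ^ ((1 : ℝ) / (k : ℝ))) x :=
      continuousAt_const.add ((Real.continuous_exp.comp (by fun_prop)).continuousAt.mul h2)
    exact h3.rpow_const (Or.inl (ne_of_gt (hbase x hx)))
  -- uniform exponential bound for s ≤ x, x ∈ U
  have hbound : ∀ x ∈ U, ∀ s, s ≤ x →
      g s ≤ ((1 - |c| * Real.exp ((n : ℝ) * x)) ^ ((1 : ℝ) / (k : ℝ))) ^ (-(1 : ℝ) / 2)
        * Real.exp s := by
    intro x hx s hs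
    have hsU : s ∈ U := hUdown x hx s hs
    set D := (1 - |c| * Real.exp ((n : ℝ) * x)) ^ ((1 : ℝ) / (k : ℝ)) with hD
    have hDpos : 0 < D := Real.rpow_pos_of_pos hx _
    have hAs : (1 - |c| * Real.exp ((n : ℝ) * x)) ≤ (1 - |c| * Real.exp ((n : ℝ) * s)) := by
      have h1 : Real.exp ((n:ℝ) * s) ≤ Real.exp ((n:ℝ) * x) :=
        Real.exp_le_exp.mpr (by nlinarith)
      nlinarith [abs_nonneg c]
    have hD2 : D ≤ (1 - |c| * Real.exp ((n : ℝ) * s)) ^ ((1 : ℝ) / (k : ℝ)) :=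
      Real.rpow_le_rpow (le_of_lt hx) hAs (by positivity)
    have hlow : Real.exp (-2 * s) * D ≤
        1 + Real.exp (-2 * s) * (1 - |c| * Real.exp ((n : ℝ) * s)) ^ ((1 : ℝ) / (k : ℝ)) := by
      nlinarith [Real.exp_pos (-2 * s)]
    have h4 : g s ≤ (Real.exp (-2 * s) * D) ^ (-(1 : ℝ) / 2) := by
      rw [hg]
      simp only [gfun]
      exact Real.rpow_le_rpow_of_nonpos (by positivity) hlow (by norm_num)
    have h5 : (Real.exp (-2 * s) * D) ^ (-(1 : ℝ) / 2)
        = D ^ (-(1 : ℝ) / 2) * Real.exp s := by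
      rw [Real.mul_rpow (le_of_lt (Real.exp_pos _)) (le_of_lt hDpos),
        Real.rpow_def_of_pos (Real.exp_pos _), Real.log_exp,
        show (-2 * s) * (-(1:ℝ)/2) = s by ring, mul_comm]
    calc g s ≤ (Real.exp (-2 * s) * D) ^ (-(1 : ℝ) / 2) := h4
      _ = D ^ (-(1 : ℝ) / 2) * Real.exp s := h5
  -- integrability on half-lines
  have hint : ∀ x ∈ U, IntegrableOn g (Set.Iic x) := by
    intro x hx
    set Cx := ((1 - |c| * Real.exp ((n : ℝ) * x)) ^ ((1 : ℝ) / (k : ℝ))) ^ (-(1 : ℝ) / 2) with hCx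
    have hCpos : 0 < Cx := Real.rpow_pos_of_pos (Real.rpow_pos_of_pos hx _) _
    have hbint : IntegrableOn (fun s => Cx * Real.exp s) (Set.Iic x) :=
      (integrableOn_exp_Iic x).const_mul Cx
    refine Integrable.mono' hbint ?_ ?_
    · exact (continuousOn_of_forall_continuousAt fun s hs =>
        hgcont s (hUdown x hx s hs)).aestronglyMeasurable measurableSet_Iic
    · filter_upwards [MeasureTheory.ae_restrict_mem measurableSet_Iic] with s hs
      rw [Real.norm_eq_abs, abs_of_pos (hgpos s (hUdown x hx s hs))]
      exact hbound x hx s hs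
  have hintIio : ∀ x ∈ U, IntegrableOn g (Set.Iio x) := fun x hx =>
    (hint x hx).mono_set Set.Iio_subset_Iic_self
  -- the antiderivative
  set G : ℝ → ℝ := Gfun n k c with hGdef
  have hGIic : ∀ x, G x = ∫ s in Set.Iic x, g s := fun x =>
    (MeasureTheory.integral_Iic_eq_integral_Iio).symm
  have hGIio : ∀ x, G x = ∫ s in Set.Iio x, g s := fun x => rfl
  have hGderiv : ∀ x ∈ U, HasDerivAt G (g x) x := by
    intro x hx
    have hmem : U ∈ nhds x := hUopen.mem_nhds hx
    have hΨ : HasDerivAt (fun y => G x + ∫ s in x..y, g s) (g x) x := by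
      refine HasDerivAt.const_add _ ?_
      refine intervalIntegral.integral_hasDerivAt_right ?_ ?_ (hgcont x hx)
      · exact ((hint x hx).mono_set (by simp)).intervalIntegrable
      · exact ContinuousAt.stronglyMeasurableAtFilter hUopen hgcont x hx
    refine hΨ.congr_of_eventuallyEq ?_
    filter_upwards [hmem] with y hy
    have h1 : (∫ s in x..y, g s) = (∫ s in Set.Iic y, g s) - ∫ s in Set.Iic x, g s :=
      (intervalIntegral.integral_Iic_sub_Iic (hint x hx) (hint y hy)).symm
    rw [hGIic y, hGIic x, h1]
    ring
  -- G ∘ ξ + t is constant on the interval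
  have hconst : ∀ t ∈ Set.Ioo Tlow Thigh, G (ξ t) + t = G p := by
    intro t ht
    have hzero : ∀ u ∈ Set.Ioo Tlow Thigh, HasDerivAt (fun t => G (ξ t) + t) 0 u := by
      intro u hu
      have hxU : ξ u ∈ U := (hpoint u hu).1
      have hcomp : HasDerivAt (fun t => G (ξ t)) (g (ξ u) * ξ' u) u :=
        HasDerivAt.comp u (hGderiv (ξ u) hxU) (hderiv1 u hu)
      have hsum : HasDerivAt (fun t => G (ξ t) + t) (g (ξ u) * ξ' u + 1) u :=
        hcomp.add (hasDerivAt_id u)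
      have hy : ξ' u < -1 := hlt u hu
      have hyne : ξ' u ≠ 0 := by linarith
      have hgval : g (ξ u) = (-(ξ' u))⁻¹ := by
        rw [hg]
        simp only [gfun]
        rw [(hpoint u hu).2, show (-(1:ℝ)/2) = -(1/2) by ring,
          Real.rpow_neg (sq_nonneg _), ← Real.sqrt_eq_rpow, Real.sqrt_sq_eq_abs,
          abs_of_neg (by linarith : ξ' u < 0)]
      have : g (ξ u) * ξ' u + 1 = 0 := by
        rw [hgval]
        field_simp
        ring
      exact this ▸ hsum
    have := aux_const hIooOpen hIooConv hzero ht h0mem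
    rw [this, hval, add_zero]
  -- p ∈ U
  have hpU : p ∈ U := by
    have := (hpoint 0 h0mem).1
    rwa [hval] at this
  -- G tends to 0 at -∞
  have hGbot : Tendsto G atBot (nhds 0) := by
    set Cp := ((1 - |c| * Real.exp ((n : ℝ) * p)) ^ ((1 : ℝ) / (k : ℝ))) ^ (-(1 : ℝ) / 2) with hCp
    have hCpos : 0 < Cp := Real.rpow_pos_of_pos (Real.rpow_pos_of_pos hpU _) _
    have hexp : Tendsto (fun x : ℝ => Cp * Real.exp x) atBot (nhds 0) := by
      simpa using Real.tendsto_exp_atBot.const_mul Cp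
    refine squeeze_zero_norm' ?_ hexp
    filter_upwards [eventually_le_atBot p] with x hxp
    have hxU : x ∈ U := hUdown p hpU x hxp
    have h1 : ‖G x‖ ≤ ∫ s in Set.Iio x, ‖g s‖ := norm_integral_le_integral_norm g
    have h2 : (∫ s in Set.Iio x, ‖g s‖) ≤ ∫ s in Set.Iio x, Cp * Real.exp s := by
      refine MeasureTheory.integral_mono_of_nonneg ?_ ?_ ?_
      · filter_upwards with s; positivity
      · have hb2 : IntegrableOn (fun s => Cp * Real.exp s) (Set.Iic x) :=
          (integrableOn_exp_Iic x).const_mul Cp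
        exact hb2.mono_set Set.Iio_subset_Iic_self
      · filter_upwards [MeasureTheory.ae_restrict_mem measurableSet_Iio] with s hs
        rw [Real.norm_eq_abs, abs_of_pos (hgpos s (hUdown x hxU s (le_of_lt hs)))]
        exact hbound p hpU s (le_trans (le_of_lt hs) hxp)
    have h3 : (∫ s in Set.Iio x, Cp * Real.exp s) = Cp * Real.exp x := by
      rw [← MeasureTheory.integral_Iic_eq_integral_Iio, MeasureTheory.integral_const_mul,
        integral_exp_Iic]
    calc ‖G x‖ ≤ ∫ s in Set.Iio x, ‖g s‖ := h1
      _ ≤ ∫ s in Set.Iio x, Cp * Real.exp s := h2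
      _ = Cp * Real.exp x := h3
  -- pass to the limit t → Thigh⁻
  have hne : (nhdsWithin Thigh (Set.Iio Thigh)).NeBot := nhdsLT_neBot Thigh
  have hlim1 : Tendsto (fun t => G (ξ t) + t) (nhdsWithin Thigh (Set.Iio Thigh))
      (nhds (0 + Thigh)) := by
    refine Tendsto.add ?_ ?_
    · exact hGbot.comp hblow
    · exact tendsto_nhdsWithin_of_tendsto_nhds tendsto_id
  have hlim2 : Tendsto (fun t => G (ξ t) + t) (nhdsWithin Thigh (Set.Iio Thigh))
      (nhds (G p)) := by
    refine Tendsto.congr' ?_ tendsto_const_nhds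
    have hmem2 : Set.Ioo Tlow Thigh ∈ nhdsWithin Thigh (Set.Iio Thigh) := by
      rw [show Set.Ioo Tlow Thigh = Set.Ioi Tlow ∩ Set.Iio Thigh from rfl]
      exact Filter.inter_mem (mem_nhdsWithin_of_mem_nhds
        (Ioi_mem_nhds (lt_trans hTlow hThigh))) self_mem_nhdsWithin
    filter_upwards [hmem2] with t ht
    exact (hconst t ht).symm
  have hfinal : (0:ℝ) + Thigh = G p := tendsto_nhds_unique hlim1 hlim2
  have : Thigh = G p := by linarith [hfinal]
  rw [this, hGdef]
  rfl
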